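/- Under scenario S_dd with p = 1/2 and β ∈ [0,1), the BDe limiting expected log posterior ratio equals ((1+β)/2)·log(1+β) + ((1−β)/2)·log(1−β), which is bounded above by log 2, whereas the BGe limiting ratio (1/2)·log(1/(1−β²)) is unbounded as β → 1⁻. -/
import Mathlib


open Real Filter

/-- Under `S_dd` with `p = 1/2` and `β ∈ [0,1)`: with cells `p11 = p00 = (1+β)/4`,
`p10 = p01 = (1−β)/4` and uniform marginals `1/2`, the BDe limiting expected log posterior
ratio equals `((1+β)/2)·log(1+β) + ((1−β)/2)·log(1−β)`, which is bounded above by `log 2`,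
whereas the BGe limiting ratio `(1/2)·log(1/(1−β²))` tends to `+∞` as `β → 1⁻`. -/
theorem stmt_10 :
    (∀ β : ℝ, 0 ≤ β → β < 1 →
      ((1 + β) / 4) * Real.log (((1 + β) / 4) / ((1 / 2) * (1 / 2))) +
        ((1 - β) / 4) * Real.log (((1 - β) / 4) / ((1 / 2) * (1 / 2))) +
        ((1 - β) / 4) * Real.log (((1 - β) / 4) / ((1 / 2) * (1 / 2))) +
        ((1 + β) / 4) * Real.log (((1 + β) / 4) / ((1 / 2) * (1 / 2))) =
      ((1 + β) / 2) * Real.log (1 + β) + ((1 - β) / 2) * Real.log (1 - β)) ∧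
    (∀ β : ℝ, 0 ≤ β → β < 1 →
      ((1 + β) / 2) * Real.log (1 + β) + ((1 - β) / 2) * Real.log (1 - β) ≤ Real.log 2) ∧
    Tendsto (fun β : ℝ => (1 / 2) * Real.log (1 / (1 - β ^ 2)))
      (nhdsWithin 1 (Set.Iio 1)) atTop := by
  refine ⟨?_, ?_, ?_⟩
  · intro β h0 h1
    have e1 : ((1 + β) / 4) / ((1 / 2 : ℝ) * (1 / 2)) = 1 + β := by ring
    have e2 : ((1 - β) / 4) / ((1 / 2 : ℝ) * (1 / 2)) = 1 - β := by ring
    rw [e1, e2]; ring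
  · intro β h0 h1
    have hb2 : Real.log (1 + β) ≤ Real.log 2 := by
      apply Real.log_le_log (by linarith)
      linarith
    have hneg : Real.log (1 - β) ≤ 0 :=
      Real.log_nonpos (by linarith) (by linarith)
    have h2 : (0:ℝ) ≤ Real.log 2 := Real.log_nonneg (by norm_num)
    nlinarith [Real.log_nonneg (by linarith : (1:ℝ) ≤ 1 + β)]
  · have h1 : Tendsto (fun β : ℝ => 1 - β ^ 2) (nhdsWithin 1 (Set.Iio 1))
        (nhdsWithin 0 (Set.Ioi 0)) := by
      apply tendsto_nhdsWithin_of_tendsto_nhds_of_eventually_within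
      · have : Tendsto (fun β : ℝ => 1 - β ^ 2) (nhds 1) (nhds (1 - 1 ^ 2)) := by
          exact (tendsto_const_nhds.sub ((continuous_pow 2).tendsto 1))
        simpa using this.mono_left nhdsWithin_le_nhds
      · filter_upwards [self_mem_nhdsWithin,
          eventually_nhdsWithin_of_eventually_nhds
            (eventually_gt_nhds (by norm_num : (0:ℝ) < 1))] with β hβ hβ0
        have : β ^ 2 < 1 := by
          have := Set.mem_Iio.mp hβ
          nlinarith
        simpa using this
    have h2 : Tendsto (fun β : ℝ => Real.log (1 - β ^ 2)) (nhdsWithin 1 (Set.Iio 1)) atBot :=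
      Real.tendsto_log_nhdsGT_zero.comp h1
    have h3 : Tendsto (fun β : ℝ => (1/2 : ℝ) * -Real.log (1 - β ^ 2))
        (nhdsWithin 1 (Set.Iio 1)) atTop := by
      apply Tendsto.const_mul_atTop (by norm_num : (0:ℝ) < 1/2)
      exact tendsto_neg_atBot_atTop.comp h2
    refine h3.congr' ?_
    filter_upwards [self_mem_nhdsWithin,
      eventually_nhdsWithin_of_eventually_nhds
        (eventually_gt_nhds (by norm_num : (0:ℝ) < 1))] with β hβ hβ0
    have hpos : 0 < 1 - β ^ 2 := by
      have := Set.mem_Iio.mp hβ; nlinarith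
    rw [Real.log_div (by norm_num) (ne_of_gt hpos), Real.log_one]
    ring
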